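/- Let G = (V, E) be a finite simple graph on n vertices with independence number α(G), adjacency matrix A_G, and identity I_n. Then min over the standard simplex Δ_n = {x ∈ ℝ^n : x ≥ 0, Σ_i x_i = 1} of xᵀ(I_n + A_G)x equals 1/α(G). (Motzkin–Straus theorem.) -/

import Mathlib

open Matrix Finset

-- quadratic form as double sum
lemma quad_eq {n : ℕ} (M : Matrix (Fin n) (Fin n) ℝ) (x : Fin n → ℝ) :
    x ⬝ᵥ M.mulVec x = ∑ i, ∑ j, x i * (M i j * x j) := by
  simp [dotProduct, Matrix.mulVec, Finset.mul_sum]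

-- symmetry
lemma sym_dot {n : ℕ} (G : SimpleGraph (Fin n)) [DecidableRel G.Adj]
    (x d : Fin n → ℝ) :
    x ⬝ᵥ (1 + G.adjMatrix ℝ).mulVec d = d ⬝ᵥ (1 + G.adjMatrix ℝ).mulVec x := by
  rw [Matrix.dotProduct_mulVec, ← Matrix.mulVec_transpose]
  rw [Matrix.transpose_add, Matrix.transpose_one, SimpleGraph.transpose_adjMatrix]
  exact dotProduct_comm _ _

lemma ms_lower {n : ℕ} (G : SimpleGraph (Fin n)) [DecidableRel G.Adj] (a : ℕ) (ha : 0 < a)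
    (hub : ∀ s : Finset (Fin n),
      (↑s : Set (Fin n)).Pairwise (fun i j => ¬ G.Adj i j) → s.card ≤ a) :
    ∀ m (x : Fin n → ℝ), (Finset.univ.filter (fun i => x i ≠ 0)).card ≤ m →
      (∀ i, 0 ≤ x i) → ∑ i, x i = 1 →
      (1 : ℝ) / a ≤ x ⬝ᵥ ((1 + G.adjMatrix ℝ).mulVec x) := by
  intro m
  induction m with
  | zero =>
      intro x hcard hpos hsum
      exfalso
      have : ∀ i, x i = 0 := by
        intro i
        by_contra h
        have : i ∈ Finset.univ.filter (fun i => x i ≠ 0) := by simp [h]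
        have := Finset.card_pos.2 ⟨i, this⟩
        omega
      simp [this] at hsum
  | succ m ih =>
      intro x hcard hpos hsum
      set M := (1 : Matrix (Fin n) (Fin n) ℝ) + G.adjMatrix ℝ with hM
      set s : Finset (Fin n) := Finset.univ.filter (fun i => x i ≠ 0) with hs
      -- the key step lemma
      have step : ∀ i j : Fin n, x i ≠ 0 → x j ≠ 0 → G.Adj i j →
          (M.mulVec x) i ≤ (M.mulVec x) j →
          (1 : ℝ) / a ≤ x ⬝ᵥ M.mulVec x := by
        intro i j hi hj hadj hle
        have hij : i ≠ j := G.ne_of_adj hadj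
        set d : Fin n → ℝ := Pi.single i 1 - Pi.single j 1 with hd
        set y : Fin n → ℝ := x + x j • d with hy
        have hyi : y i = x i + x j := by
          simp [hy, hd, Pi.single_apply, hij]
        have hyj : y j = 0 := by
          simp [hy, hd, Pi.single_apply, hij.symm, Ne.symm hij]
        have hyk : ∀ k, k ≠ i → k ≠ j → y k = x k := by
          intro k hki hkj
          simp [hy, hd, Pi.single_apply, hki, hkj]
        -- nonneg
        have hypos : ∀ k, 0 ≤ y k := by
          intro k
          rcases eq_or_ne k i with rfl | hki
          · rw [hyi]; exact add_nonneg (hpos _) (hpos _)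
          rcases eq_or_ne k j with rfl | hkj
          · rw [hyj]
          · rw [hyk k hki hkj]; exact hpos _
        -- sum
        have hysum : ∑ k, y k = 1 := by
          have : ∑ k, d k = 0 := by
            simp [hd, Finset.sum_sub_distrib, Finset.sum_pi_single]
          simp [hy, Finset.sum_add_distrib, hsum, ← Finset.mul_sum, this]
        -- support
        have hsupp : (Finset.univ.filter (fun k => y k ≠ 0)) ⊆ s.erase j := by
          intro k hk
          simp only [Finset.mem_filter, Finset.mem_univ, true_and] at hk
          rw [Finset.mem_erase]
          constructor
          · rintro rfl; exact hk hyj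
          · rcases eq_or_ne k i with rfl | hki
            · simp [hs, hi]
            rcases eq_or_ne k j with rfl | hkj
            · exact absurd hyj hk
            · rw [hyk k hki hkj] at hk; simp [hs, hk]
        have hjs : j ∈ s := by simp [hs, hj]
        have hycard : (Finset.univ.filter (fun k => y k ≠ 0)).card ≤ m := by
          have h1 := Finset.card_le_card hsupp
          have h2 : (s.erase j).card = s.card - 1 := Finset.card_erase_of_mem hjs
          have h3 : 0 < s.card := Finset.card_pos.2 ⟨j, hjs⟩
          omega
        -- quadratic form comparison
        have hdMx : d ⬝ᵥ M.mulVec x = (M.mulVec x) i - (M.mulVec x) j := by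
          simp [hd, sub_dotProduct, single_dotProduct]
        have hMd : M.mulVec d = fun k => M k i - M k j := by
          have : M.mulVec d = M.mulVec (Pi.single i 1) - M.mulVec (Pi.single j 1) := by
            rw [hd, Matrix.mulVec_sub]
          rw [this, Matrix.mulVec_single, Matrix.mulVec_single]
          funext k; simp
        have hdMd : d ⬝ᵥ M.mulVec d = 0 := by
          rw [hMd]
          simp only [hd, sub_dotProduct, single_dotProduct, one_mul]
          have h1 : M i i = 1 := by simp [hM]
          have h2 : M j j = 1 := by simp [hM]
          have h3 : M i j = 1 := by simp [hM, hadj, Matrix.one_apply_ne hij]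
          have h4 : M j i = 1 := by simp [hM, hadj.symm, Matrix.one_apply_ne (Ne.symm hij)]
          simp [h1, h2, h3, h4]
        have hexp : y ⬝ᵥ M.mulVec y
            = x ⬝ᵥ M.mulVec x + (2 * x j) * (d ⬝ᵥ M.mulVec x)
              + (x j)^2 * (d ⬝ᵥ M.mulVec d) := by
          rw [hy, Matrix.mulVec_add, Matrix.mulVec_smul, add_dotProduct,
            dotProduct_add, dotProduct_add, smul_dotProduct,
            dotProduct_smul, smul_dotProduct, dotProduct_smul,
            sym_dot G x d]
          ring_nf
          simp [smul_eq_mul]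
          ring
        have hle2 : y ⬝ᵥ M.mulVec y ≤ x ⬝ᵥ M.mulVec x := by
          rw [hexp, hdMd, hdMx]
          nlinarith [hpos j, hle]
        exact le_trans (ih y hycard hypos hysum) hle2
      by_cases hadj : ∃ p : Fin n × Fin n, x p.1 ≠ 0 ∧ x p.2 ≠ 0 ∧ G.Adj p.1 p.2
      · obtain ⟨⟨i, j⟩, hi, hj, hij⟩ := hadj
        rcases le_total ((M.mulVec x) i) ((M.mulVec x) j) with h | h
        · exact step i j hi hj hij h
        · exact step j i hj hi hij.symm h
      · -- independent support
        push_neg at hadj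
        have hind : (↑s : Set (Fin n)).Pairwise (fun i j => ¬ G.Adj i j) := by
          intro i hi j hj _
          simp only [hs, Finset.coe_filter, Set.mem_setOf_eq] at hi hj
          exact hadj (i, j) hi.2 hj.2
        have hcards : s.card ≤ a := hub s hind
        have hQ : x ⬝ᵥ M.mulVec x = ∑ i ∈ s, (x i)^2 := by
          rw [quad_eq]
          rw [← Finset.sum_filter_add_sum_filter_not Finset.univ (fun i => x i ≠ 0)]
          have h0 : ∑ i ∈ Finset.univ.filter (fun i => ¬ x i ≠ 0),
              ∑ j, x i * (M i j * x j) = 0 := by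
            apply Finset.sum_eq_zero
            intro i hi
            simp only [Finset.mem_filter, not_not] at hi
            simp [hi.2]
          rw [h0, add_zero]
          apply Finset.sum_congr rfl
          intro i hi
          simp only [hs, Finset.mem_filter] at hi
          rw [← Finset.sum_filter_add_sum_filter_not Finset.univ (fun j => x j ≠ 0)]
          have h0' : ∑ j ∈ Finset.univ.filter (fun j => ¬ x j ≠ 0),
              x i * (M i j * x j) = 0 := by
            apply Finset.sum_eq_zero
            intro j hj
            simp only [Finset.mem_filter, not_not] at hj
            simp [hj.2]
          rw [h0', add_zero]
          rw [show Finset.univ.filter (fun j => x j ≠ 0) = s from rfl]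
          rw [Finset.sum_eq_single_of_mem i (by simp [hs, hi.2])]
          · have : M i i = 1 := by simp [hM]
            rw [this]; ring
          · intro j hj hji
            have : ¬ G.Adj i j := hind (by simp [hs, hi.2]) (by
                simp only [hs, Finset.mem_filter] at hj
                simp [hs, hj.2]) (Ne.symm hji)
            have : M i j = 0 := by simp [hM, this, Ne.symm hji]
            simp [this]
        rw [hQ]
        have hsum' : ∑ i ∈ s, x i = 1 := by
          rw [← hsum]
          apply Finset.sum_subset (Finset.subset_univ s)
          intro i _ hi
          simpa [hs] using hi
        have hcs : (∑ i ∈ s, x i)^2 ≤ s.card * ∑ i ∈ s, (x i)^2 :=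
          sq_sum_le_card_mul_sum_sq
        rw [hsum', one_pow] at hcs
        have hpos2 : (0:ℝ) < a := by exact_mod_cast ha
        have hsq : 0 ≤ ∑ i ∈ s, (x i)^2 := Finset.sum_nonneg fun i _ => sq_nonneg _
        rw [div_le_iff₀ hpos2] at *
        calc (1:ℝ) ≤ s.card * ∑ i ∈ s, (x i)^2 := hcs
          _ ≤ a * ∑ i ∈ s, (x i)^2 := by
              apply mul_le_mul_of_nonneg_right _ hsq
              exact_mod_cast hcards
          _ = (∑ i ∈ s, (x i)^2) * a := by ring

/-- Motzkin–Straus theorem: for a finite simple graph `G` on `n ≥ 1` vertices with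
independence number `a = α(G)`, the minimum of `xᵀ(I + A_G)x` over the standard simplex
equals `1/α(G)`, and it is attained. -/
theorem motzkin_straus (n : ℕ) (hn : 0 < n) (G : SimpleGraph (Fin n))
    [DecidableRel G.Adj] (a : ℕ)
    (hα : IsGreatest {k : ℕ | ∃ s : Finset (Fin n),
        (↑s : Set (Fin n)).Pairwise (fun i j => ¬ G.Adj i j) ∧ s.card = k} a) :
    IsLeast {t : ℝ | ∃ x : Fin n → ℝ, (∀ i, 0 ≤ x i) ∧ (∑ i, x i = 1) ∧
        t = dotProduct x ((1 + G.adjMatrix ℝ).mulVec x)} (1 / (a : ℝ)) := by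
  obtain ⟨⟨s, hsind, hscard⟩, hub'⟩ := hα
  have ha : 0 < a := by
    have h1 : 1 ∈ {k : ℕ | ∃ s : Finset (Fin n),
        (↑s : Set (Fin n)).Pairwise (fun i j => ¬ G.Adj i j) ∧ s.card = k} := by
      obtain ⟨v⟩ : Nonempty (Fin n) := ⟨⟨0, hn⟩⟩
      exact ⟨{v}, by simp, by simp⟩
    exact lt_of_lt_of_le one_pos (hub' h1)
  have hapos : (0:ℝ) < a := by exact_mod_cast ha
  constructor
  · -- attained by uniform distribution on s
    refine ⟨fun i => if i ∈ s then (a : ℝ)⁻¹ else 0, ?_, ?_, ?_⟩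
    · intro i; simp only; split <;> positivity
    · rw [Finset.sum_ite_mem, Finset.univ_inter, Finset.sum_const, hscard,
        nsmul_eq_mul, mul_inv_cancel₀ (ne_of_gt hapos)]
    · rw [quad_eq]
      have key : ∀ i, ∑ j, (if i ∈ s then (a : ℝ)⁻¹ else 0) *
          (((1 : Matrix (Fin n) (Fin n) ℝ) + G.adjMatrix ℝ) i j *
            (if j ∈ s then (a : ℝ)⁻¹ else 0))
          = if i ∈ s then (a:ℝ)⁻¹ * (a:ℝ)⁻¹ else 0 := by
        intro i
        by_cases hi : i ∈ s
        · simp only [hi, if_true]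
          rw [Finset.sum_eq_single_of_mem i (Finset.mem_univ i)]
          · simp [hi]
          · intro j _ hji
            by_cases hj : j ∈ s
            · have hnadj : ¬ G.Adj i j := hsind hi hj (Ne.symm hji)
              simp [hj, hnadj, Matrix.one_apply_ne (Ne.symm hji)]
            · simp [hj]
        · simp [hi]
      rw [Finset.sum_congr rfl (fun i _ => key i)]
      rw [Finset.sum_ite_mem, Finset.univ_inter, Finset.sum_const, hscard, nsmul_eq_mul]
      field_simp
  · rintro t ⟨x, hpos, hsum, rfl⟩
    exact ms_lower G a ha (fun u hu => hub' ⟨u, hu, rfl⟩) _ x le_rfl hpos hsum
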